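/- Let ψ : ℝⁿ × ℝᵐ → ℝ be continuous and q : ℝⁿ × ℝᵐ → ℝ ∪ {+∞} be lower semicontinuous, and suppose there is an open set Ω ⊆ ℝⁿ such that for every x ∈ Ω the set argmin_y {ψ(x,y) + q(x,y)} = {σ(x)} is a singleton. Assume further that for every x̄ ∈ Ω the function x ↦ q(x, σ(x̄)) is continuous at x̄, and there is a neighborhood U of x̄ such that {σ(x) | x ∈ U} is bounded. Then σ : Ω → ℝᵐ is continuous on Ω. -/

import Mathlib

open Filter Topology Set

/-- Lemma 4.2: continuity of the single-valued global-minimizer map. Let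
`ψ : ℝⁿ × ℝᵐ → ℝ` be continuous, `q : ℝⁿ × ℝᵐ → ℝ ∪ {+∞}` (modelled by `EReal`-valued,
never `-∞`) be lsc, and suppose on an open set `Ω` the set `argmin_y ψ(x,y) + q(x,y)` is the
singleton `{σ(x)}`. If for each `xb ∈ Ω` the function `x ↦ q(x, σ(xb))` is continuous at `xb`
and `σ` is locally bounded near `xb`, then `σ` is continuous on `Ω`. -/
theorem argmin_map_continuous {n m : ℕ}
    (ψ : EuclideanSpace ℝ (Fin n) × EuclideanSpace ℝ (Fin m) → ℝ) (hψ : Continuous ψ)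
    (q : EuclideanSpace ℝ (Fin n) × EuclideanSpace ℝ (Fin m) → EReal)
    (hqbot : ∀ p, q p ≠ ⊥) (hq : LowerSemicontinuous q)
    (Ω : Set (EuclideanSpace ℝ (Fin n))) (hΩ : IsOpen Ω)
    (σ : EuclideanSpace ℝ (Fin n) → EuclideanSpace ℝ (Fin m))
    (hargmin : ∀ x ∈ Ω,
      {y : EuclideanSpace ℝ (Fin m) |
        ∀ y' : EuclideanSpace ℝ (Fin m),
          (ψ (x, y) : EReal) + q (x, y) ≤ (ψ (x, y') : EReal) + q (x, y')} = {σ x})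
    (hqcont : ∀ xb ∈ Ω, ContinuousAt (fun x => q (x, σ xb)) xb)
    (hbdd : ∀ xb ∈ Ω, ∃ U ∈ 𝓝 xb, Bornology.IsBounded (σ '' U)) :
    ContinuousOn σ Ω := by
  intro xb hxb
  set f : EuclideanSpace ℝ (Fin n) × EuclideanSpace ℝ (Fin m) → EReal :=
    fun p => (ψ p : EReal) + q p with hfdef
  have hmin : ∀ x ∈ Ω, ∀ y', f (x, σ x) ≤ f (x, y') := by
    intro x hx y'
    have hmem : σ x ∈ ({σ x} : Set (EuclideanSpace ℝ (Fin m))) := rfl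
    rw [← hargmin x hx] at hmem
    exact hmem y'
  rw [ContinuousWithinAt, Metric.tendsto_nhds]
  by_contra hcon
  push_neg at hcon
  obtain ⟨ε, hε, hfreq⟩ := hcon
  replace hfreq : ∃ᶠ x in 𝓝[Ω] xb, ¬ dist (σ x) (σ xb) < ε := hfreq.mono (fun x hx => not_lt.mpr hx)
  set F := (𝓝[Ω] xb) ⊓ 𝓟 {x | ¬ dist (σ x) (σ xb) < ε} with hF
  have hFne : F.NeBot := Filter.frequently_iff_neBot.mp hfreq
  obtain ⟨U, hU, hUb⟩ := hbdd xb hxb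
  have hK : IsCompact (closure (σ '' U)) := hUb.isCompact_closure
  have hFn : F ≤ 𝓝[Ω] xb := inf_le_left
  have hFnn : F ≤ 𝓝 xb := hFn.trans nhdsWithin_le_nhds
  have hmap : Filter.map σ F ≤ 𝓟 (closure (σ '' U)) := by
    rw [Filter.le_principal_iff, Filter.mem_map]
    filter_upwards [hFnn hU] with x hx
    exact subset_closure (mem_image_of_mem σ hx)
  obtain ⟨y, hyK, hy⟩ := hK.exists_clusterPt hmap
  have hGne : (F ⊓ Filter.comap σ (𝓝 y)).NeBot := by
    rw [← Filter.map_neBot_iff σ, Filter.push_pull, inf_comm]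
    exact hy.neBot
  set G := F ⊓ Filter.comap σ (𝓝 y) with hG
  have hGF : G ≤ F := inf_le_left
  have hGx : Tendsto (fun x => x) G (𝓝 xb) := hGF.trans hFnn
  have hGσ : Tendsto σ G (𝓝 y) := Filter.tendsto_iff_comap.mpr inf_le_right
  have hGΩ : ∀ᶠ x in G, x ∈ Ω := hGF (hFn self_mem_nhdsWithin)
  have hGd : ∀ᶠ x in G, ε ≤ dist (σ x) (σ xb) := by
    have h1 : ∀ᶠ x in F, ¬ dist (σ x) (σ xb) < ε :=
      (inf_le_right : F ≤ 𝓟 {x | ¬ dist (σ x) (σ xb) < ε}) (mem_principal_self _)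
    filter_upwards [hGF h1] with x hx
    exact not_lt.mp hx
  have hyd : ε ≤ dist y (σ xb) := by
    have hcl : IsClosed {z : EuclideanSpace ℝ (Fin m) | ε ≤ dist z (σ xb)} :=
      isClosed_le continuous_const (continuous_id.dist continuous_const)
    exact hcl.mem_of_tendsto hGσ hGd
  have hyne : y ≠ σ xb := by
    intro h
    rw [h, dist_self] at hyd
    linarith
  -- lower semicontinuity of `f` at `(xb, y)`
  have hlsc : ∀ c : EReal, c < f (xb, y) → ∀ᶠ p in 𝓝 (xb, y), c < f p := by
    intro c hc
    induction c with
    | bot =>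
      filter_upwards with p
      have : f p ≠ ⊥ := by
        simp only [hfdef, ne_eq, EReal.add_eq_bot_iff]
        push_neg
        exact ⟨EReal.coe_ne_bot _, hqbot p⟩
      exact this.bot_lt
    | coe r =>
      have hra : ((r - ψ (xb, y) : ℝ) : EReal) < q (xb, y) := by
        by_contra hcontra
        push_neg at hcontra
        have h2 : (ψ (xb, y) : EReal) + q (xb, y)
            ≤ (ψ (xb, y) : EReal) + ((r - ψ (xb, y) : ℝ) : EReal) :=
          add_le_add_right hcontra _
        rw [← EReal.coe_add] at h2
        have h3 : (ψ (xb, y) + (r - ψ (xb, y))) = r := by ring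
        rw [h3] at h2
        exact absurd (hc.trans_le h2) (lt_irrefl _)
      obtain ⟨d, hd1, hd2⟩ := EReal.exists_between_coe_real hra
      have h1 : ∀ᶠ p in 𝓝 (xb, y), (d : EReal) < q p := hq _ _ hd2
      have h2 : ∀ᶠ p in 𝓝 (xb, y), r - d < ψ p := by
        have hopen : IsOpen {p | r - d < ψ p} := isOpen_lt continuous_const hψ
        have hmem2 : (xb, y) ∈ {p | r - d < ψ p} := by
          have := EReal.coe_lt_coe_iff.mp hd1
          simp only [mem_setOf_eq]
          linarith
        exact eventually_of_mem (hopen.mem_nhds hmem2) (fun p hp => hp)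
      filter_upwards [h1, h2] with p hp1 hp2
      have heq : (r : EReal) = ((r - d : ℝ) : EReal) + (d : EReal) := by
        rw [← EReal.coe_add]; norm_num
      rw [heq]
      exact EReal.add_lt_add (EReal.coe_lt_coe_iff.mpr hp2) hp1
    | top => exact absurd hc (not_top_lt)
  have htend : Tendsto (fun x => ((x : EuclideanSpace ℝ (Fin n)), σ x)) G (𝓝 (xb, y)) :=
    hGx.prodMk_nhds hGσ
  have hA : f (xb, y) ≤ Filter.liminf (fun x => f (x, σ x)) G := by
    by_contra hcontra
    push_neg at hcontra
    obtain ⟨c, hc1, hc2⟩ := exists_between hcontra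
    have hev : ∀ᶠ x in G, c ≤ f (x, σ x) :=
      (htend.eventually (hlsc c hc2)).mono (fun x hx => hx.le)
    exact absurd (Filter.le_liminf_of_le (by isBoundedDefault) hev) (not_le.mpr hc1)
  have hB : Filter.liminf (fun x => f (x, σ x)) G ≤ f (xb, σ xb) := by
    rcases eq_or_ne (q (xb, σ xb)) ⊤ with htop | htop
    · have : f (xb, σ xb) = ⊤ := by
        simp only [hfdef, htop, EReal.add_top_of_ne_bot (EReal.coe_ne_bot _)]
      rw [this]; exact le_top
    · have h1 : ContinuousAt (fun x => ((ψ (x, σ xb) : ℝ) : EReal)) xb :=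
        (continuous_coe_real_ereal.comp
          (hψ.comp (continuous_id.prodMk continuous_const))).continuousAt
      have h2 := hqcont xb hxb
      have hadd : ContinuousAt (fun p : EReal × EReal => p.1 + p.2)
          ((ψ (xb, σ xb) : EReal), q (xb, σ xb)) :=
        EReal.continuousAt_add (Or.inl (EReal.coe_ne_top _)) (Or.inl (EReal.coe_ne_bot _))
      have hwt : Tendsto (fun x => f (x, σ xb)) G (𝓝 (f (xb, σ xb))) := by
        have h3 : Tendsto (fun x => ((ψ (x, σ xb) : EReal), q (x, σ xb))) (𝓝 xb)
            (𝓝 ((ψ (xb, σ xb) : EReal), q (xb, σ xb))) := (h1.prodMk h2).tendsto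
        exact (hadd.tendsto.comp h3).comp hGx
      rw [← hwt.liminf_eq]
      refine Filter.liminf_le_liminf ?_
      filter_upwards [hGΩ] with x hx
      exact hmin x hx (σ xb)
  have hymin : ∀ y', f (xb, y) ≤ f (xb, y') :=
    fun y' => (hA.trans hB).trans (hmin xb hxb y')
  have : y ∈ ({σ xb} : Set (EuclideanSpace ℝ (Fin m))) := by
    rw [← hargmin xb hxb]; exact hymin
  exact hyne this
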